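/- Let G be a graph, v ∈ V(G), and suppose G − v contains k + 1 pairwise vertex-disjoint trees T₀, …, T_k, each with at least d vertices and all leaves in N_G(v). Then every set S ⊆ V(G) with |S| ≤ k such that every block of G − S has at most d vertices must contain v. -/

import Mathlib

open SimpleGraph

def PreconnOn {V : Type} (G : SimpleGraph V) (B : Set V) : Prop :=
  (G.induce B).Preconnected

def ConnOn {V : Type} (G : SimpleGraph V) (B : Set V) : Prop :=
  (G.induce B).Connected

def BiconnOn {V : Type} (G : SimpleGraph V) (B : Set V) : Prop :=
  ConnOn G B ∧ ∀ v ∈ B, PreconnOn G (B \ {v})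

/-- `B` is a block of the induced subgraph `G[W]`. -/
def IsBlockIn {V : Type} (G : SimpleGraph V) (W B : Set V) : Prop :=
  B ⊆ W ∧ BiconnOn G B ∧ ∀ C : Set V, B ⊆ C → C ⊆ W → BiconnOn G C → C = B

/-- In a finite tree, from any vertex `x ≠ u` there is a walk avoiding `u`
to a vertex with exactly one neighbor (a leaf). -/
lemma tree_leaf_avoid {W : Type} [Finite W] {H : SimpleGraph W} (hH : H.IsTree)
    (u x : W) (hxu : x ≠ u) :
    ∃ w : W, (∃ p : H.Walk x w, u ∉ p.support) ∧ {y : W | H.Adj w y}.ncard = 1 := by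
  classical
  set R := {w : W | ∃ p : H.Walk x w, u ∉ p.support} with hR
  have hxR : x ∈ R := ⟨Walk.nil, by simp [Ne.symm hxu]⟩
  obtain ⟨w, hwR, hmax⟩ := Set.Finite.exists_maximalFor (H.dist u) R (Set.toFinite R) ⟨x, hxR⟩
  have hble : ∀ y ∈ R, H.dist u y ≤ H.dist u w := by
    intro y hy
    by_contra hlt
    push_neg at hlt
    exact absurd (hmax hy hlt.le) (not_le.mpr hlt)
  obtain ⟨pw, hpw⟩ := hwR
  have hwu : w ≠ u := fun h => hpw (h ▸ pw.end_mem_support)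
  have hconn := hH.isConnected
  -- every neighbor of w gives rise to a path from u to w via that neighbor
  have getsp : ∀ y, H.Adj w y →
      ∃ sp : H.Walk u y, sp.IsPath ∧ sp.length = H.dist u y ∧ w ∉ sp.support := by
    intro y hy
    obtain ⟨p0, hp0len⟩ := (hconn.preconnected u y).exists_walk_length_eq_dist
    have hlen : p0.bypass.length = H.dist u y :=
      le_antisymm (by rw [← hp0len]; exact p0.length_bypass_le) (SimpleGraph.dist_le _)
    refine ⟨p0.bypass, p0.bypass_isPath, hlen, ?_⟩
    intro hw
    by_cases hyu : y = u
    · subst hyu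
      have h0 : p0.bypass.length = 0 := by rw [hlen]; simp
      have hnil : p0.bypass.Nil := Walk.nil_iff_length_eq.mpr h0
      rw [Walk.nil_iff_support_eq.mp hnil] at hw
      simp at hw
      exact hwu hw
    · have hyR : y ∈ R := by
        refine ⟨pw.concat hy, ?_⟩
        rw [Walk.support_concat]
        intro hmem
        rcases List.mem_append.mp hmem with h | h
        · exact hpw h
        · simp at h; exact hyu h.symm
      have hdy : H.dist u y ≤ H.dist u w := hble y hyR
      have h2 : H.dist u w ≤ (p0.bypass.takeUntil w hw).length := SimpleGraph.dist_le _
      have h3 := congrArg Walk.length (p0.bypass.take_spec hw)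
      rw [Walk.length_append] at h3
      rw [hlen] at h3
      have h4 : (p0.bypass.dropUntil w hw).length = 0 := by omega
      exact hy.ne (Walk.eq_of_length_eq_zero h4)
  -- uniqueness of the neighbor
  have huniqnb : ∀ y1 y2, H.Adj w y1 → H.Adj w y2 → y1 = y2 := by
    intro y1 y2 h1 h2
    obtain ⟨sp1, hsp1, -, hw1⟩ := getsp y1 h1
    obtain ⟨sp2, hsp2, -, hw2⟩ := getsp y2 h2
    have hq1 : (sp1.concat h1.symm).IsPath := by
      rw [← Walk.isPath_reverse_iff, Walk.reverse_concat, Walk.cons_isPath_iff]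
      exact ⟨hsp1.reverse, by rw [Walk.support_reverse]; simpa using hw1⟩
    have hq2 : (sp2.concat h2.symm).IsPath := by
      rw [← Walk.isPath_reverse_iff, Walk.reverse_concat, Walk.cons_isPath_iff]
      exact ⟨hsp2.reverse, by rw [Walk.support_reverse]; simpa using hw2⟩
    obtain ⟨q, -, huniq⟩ := hH.existsUnique_path u w
    have heq : sp1.concat h1.symm = sp2.concat h2.symm := (huniq _ hq1).trans (huniq _ hq2).symm
    have hsup := congrArg (fun p : H.Walk u w => p.reverse.support) heq
    simp only [Walk.reverse_concat, Walk.support_cons, List.cons.injEq, true_and] at hsup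
    have e1 := Walk.support_eq_cons sp1.reverse
    have e2 := Walk.support_eq_cons sp2.reverse
    rw [e1, e2] at hsup
    exact (List.cons.injEq _ _ _ _ ▸ hsup).1
  -- existence of a neighbor
  have hnb : ∃ y0, H.Adj w y0 := by
    obtain ⟨q⟩ := hconn.preconnected w u
    obtain ⟨y0, h, -, -⟩ := Walk.not_nil_iff.mp (Walk.not_nil_of_ne (p := q) hwu)
    exact ⟨y0, h⟩
  obtain ⟨y0, hy0⟩ := hnb
  have hset : {y : W | H.Adj w y} = {y0} := by
    ext z
    simp only [Set.mem_setOf_eq, Set.mem_singleton_iff]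
    exact ⟨fun hz => huniqnb z y0 hz hy0, fun hz => hz ▸ hy0⟩
  exact ⟨w, ⟨pw, hpw⟩, by rw [hset]; exact Set.ncard_singleton _⟩

/-- A walk in an induced subgraph whose support lies (as vertices of `V`) in `A`
yields reachability in `G.induce A`. -/
lemma reach_of_walk {V : Type} {G : SimpleGraph V} {T A : Set V} :
    ∀ {a b : ↥T} (p : (G.induce T).Walk a b) (hp : ∀ y ∈ p.support, ↑y ∈ A),
      (G.induce A).Reachable ⟨↑a, hp a p.start_mem_support⟩ ⟨↑b, hp b p.end_mem_support⟩ := by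
  intro a b p
  induction p with
  | nil =>
    intro hp
    exact Reachable.refl _
  | @cons a c b h q ih =>
    intro hp
    have ha : ↑a ∈ A := hp a (Walk.start_mem_support _)
    have hc : ↑c ∈ A := hp c (by simp)
    have hG : G.Adj ↑a ↑c := h
    have hadj : (G.induce A).Adj ⟨↑a, ha⟩ ⟨↑c, hc⟩ := hG
    have hrest := ih (fun y hy => hp y (by simp [hy]))
    exact hadj.reachable.trans hrest

/-- Version of `tree_leaf_avoid` for induced subgraphs, with the leaf condition
expressed at the level of `G`. -/
lemma exists_leaf_walk {V : Type} [Finite V] {G : SimpleGraph V} {T : Set V}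
    (hT : (G.induce T).IsTree) (u x : ↥T) (hxu : x ≠ u) :
    ∃ w : ↥T, {z ∈ T | G.Adj ↑w z}.ncard = 1 ∧
      ∃ p : (G.induce T).Walk x w, u ∉ p.support := by
  obtain ⟨w, hw, hcard⟩ := tree_leaf_avoid hT u x hxu
  refine ⟨w, ?_, hw⟩
  have himg : Subtype.val '' {y : ↥T | (G.induce T).Adj w y} = {z ∈ T | G.Adj ↑w z} := by
    ext z
    constructor
    · rintro ⟨y, hy, rfl⟩
      exact ⟨y.2, hy⟩
    · rintro ⟨hzT, hadj⟩
      exact ⟨⟨z, hzT⟩, hadj, rfl⟩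
  rw [← himg, Set.ncard_image_of_injective _ Subtype.val_injective, hcard]

/-- **safeness of Sunflower Rule 1.** If `G − v` contains `k + 1`
pairwise vertex-disjoint `(N_G(v), d)`-trees (trees with at least `d` vertices, all
of whose leaves are neighbors of `v`), then every set `S` of at most `k` vertices such
that every block of `G − S` has at most `d` vertices must contain `v`. -/
theorem stmt11 {V : Type} [Fintype V] [DecidableEq V]
    (G : SimpleGraph V) (v : V) (k d : ℕ) (hd : 2 ≤ d)
    (T : Fin (k + 1) → Set V)
    (hTv : ∀ i, v ∉ T i)
    (hTtree : ∀ i, (G.induce (T i)).IsTree)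
    (hTcard : ∀ i, d ≤ (T i).ncard)
    (hTleaf : ∀ i, ∀ u ∈ T i, {w ∈ T i | G.Adj u w}.ncard = 1 → G.Adj v u)
    (hTdisj : ∀ i j, i ≠ j → Disjoint (T i) (T j)) :
    ∀ S : Set V, S.ncard ≤ k →
      (∀ B : Set V, IsBlockIn G Sᶜ B → B.ncard ≤ d) → v ∈ S := by
  classical
  intro S hS hblock
  by_contra hvS
  -- find a tree disjoint from S
  have hdisjS : ∃ i, ∀ z ∈ T i, z ∉ S := by
    by_contra hc
    push_neg at hc
    choose f hf1 hf2 using hc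
    have hinj : Function.Injective (fun i => (⟨f i, hf2 i⟩ : ↥S)) := by
      intro i j hij
      by_contra hne
      have hfeq : f i = f j := congrArg Subtype.val hij
      exact Set.disjoint_left.mp (hTdisj i j hne) (hf1 i) (hfeq ▸ hf1 j)
    have h1 : k + 1 ≤ Nat.card ↥S := by
      have := Nat.card_le_card_of_injective _ hinj
      simpa using this
    rw [Nat.card_coe_set_eq] at h1
    omega
  obtain ⟨i, hi⟩ := hdisjS
  have hTi1 : 1 < (T i).ncard := lt_of_lt_of_le (by omega) (hTcard i)
  have hvB0 : v ∈ insert v (T i) := Set.mem_insert _ _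
  -- the key reachability claim
  have key : ∀ (u' : ↥(T i)) (A : Set V) (hvA : v ∈ A)
      (hTA : ∀ z : ↥(T i), z ≠ u' → ↑z ∈ A) (a : ↥(T i)) (ha : a ≠ u'),
      (G.induce A).Reachable ⟨↑a, hTA a ha⟩ ⟨v, hvA⟩ := by
    intro u' A hvA hTA a ha
    obtain ⟨w, hleaf, p, hup⟩ := exists_leaf_walk (hTtree i) u' a ha
    have hsupp : ∀ y ∈ p.support, ↑y ∈ A := fun y hy =>
      hTA y (fun h => hup (h ▸ hy))
    have h1 := reach_of_walk p hsupp
    have hwA : ↑w ∈ A := hsupp w p.end_mem_support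
    have hadjvw : G.Adj v ↑w := hTleaf i ↑w w.2 hleaf
    have h2 : (G.induce A).Adj ⟨↑w, hwA⟩ ⟨v, hvA⟩ := hadjvw.symm
    exact h1.trans h2.reachable
  -- the enlarged set is biconnected
  have hbiconn : BiconnOn G (insert v (T i)) := by
    constructor
    · -- connectedness
      have toV : ∀ a : ↥(insert v (T i)),
          (G.induce (insert v (T i))).Reachable a ⟨v, hvB0⟩ := by
        intro a
        by_cases hav : ↑a = v
        · have : a = ⟨v, hvB0⟩ := Subtype.ext hav
          rw [this]
        · have haTi : ↑a ∈ T i := by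
            rcases Set.mem_insert_iff.mp a.2 with h | h
            · exact absurd h hav
            · exact h
          obtain ⟨u0, hu0Ti, hu0a⟩ := Set.exists_ne_of_one_lt_ncard hTi1 ↑a
          have hTA : ∀ z : ↥(T i), z ≠ (⟨u0, hu0Ti⟩ : ↥(T i)) → ↑z ∈ insert v (T i) :=
            fun z _ => Set.mem_insert_of_mem _ z.2
          have hne : (⟨↑a, haTi⟩ : ↥(T i)) ≠ ⟨u0, hu0Ti⟩ :=
            fun h => hu0a (congrArg Subtype.val h).symm
          exact key ⟨u0, hu0Ti⟩ (insert v (T i)) hvB0 hTA ⟨↑a, haTi⟩ hne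
      have hpre : (G.induce (insert v (T i))).Preconnected :=
        fun a b => (toV a).trans (toV b).symm
      have : Nonempty ↥(insert v (T i)) := ⟨⟨v, hvB0⟩⟩
      exact Connected.mk hpre
    · -- removing any vertex keeps it preconnected
      intro u' hu'
      rcases Set.mem_insert_iff.mp hu' with rfl | hu'Ti
      · have hEq : insert u' (T i) \ {u'} = T i :=
          Set.insert_diff_self_of_notMem (hTv i)
        rw [hEq]
        exact (hTtree i).isConnected.preconnected
      · have hvu' : v ≠ u' := fun h => hTv i (h ▸ hu'Ti)
        have hvA : v ∈ insert v (T i) \ {u'} := ⟨hvB0, by simpa using hvu'⟩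
        have hTA : ∀ z : ↥(T i), z ≠ (⟨u', hu'Ti⟩ : ↥(T i)) →
            ↑z ∈ insert v (T i) \ {u'} := by
          intro z hz
          exact ⟨Set.mem_insert_of_mem _ z.2, by
            simp only [Set.mem_singleton_iff]
            exact fun h => hz (Subtype.ext h)⟩
        have toV : ∀ a : ↥(insert v (T i) \ {u'}),
            (G.induce (insert v (T i) \ {u'})).Reachable a ⟨v, hvA⟩ := by
          intro a
          by_cases hav : ↑a = v
          · have : a = ⟨v, hvA⟩ := Subtype.ext hav
            rw [this]
          · have haTi : ↑a ∈ T i := by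
              rcases Set.mem_insert_iff.mp a.2.1 with h | h
              · exact absurd h hav
              · exact h
            have hau' : ↑a ≠ u' := by
              have := a.2.2
              simpa using this
            have hne : (⟨↑a, haTi⟩ : ↥(T i)) ≠ ⟨u', hu'Ti⟩ :=
              fun h => hau' (congrArg Subtype.val h)
            exact key ⟨u', hu'Ti⟩ (insert v (T i) \ {u'}) hvA hTA ⟨↑a, haTi⟩ hne
        exact fun a b => (toV a).trans (toV b).symm
  -- the enlarged set sits inside the complement of S
  have hB0sub : insert v (T i) ⊆ Sᶜ := by
    intro z hz
    rcases Set.mem_insert_iff.mp hz with rfl | hzTi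
    · exact hvS
    · exact hi z hzTi
  -- extend to a maximal biconnected set: a block
  set F := {C : Set V | insert v (T i) ⊆ C ∧ C ⊆ Sᶜ ∧ BiconnOn G C} with hF
  have hB0F : insert v (T i) ∈ F := ⟨subset_rfl, hB0sub, hbiconn⟩
  obtain ⟨C, hCF, hCmax⟩ :=
    Set.Finite.exists_maximalFor Set.ncard F (Set.toFinite F) ⟨_, hB0F⟩
  have hblk : IsBlockIn G Sᶜ C := by
    refine ⟨hCF.2.1, hCF.2.2, ?_⟩
    intro C' hCC' hC'sub hC'bi
    have hC'F : C' ∈ F := ⟨hCF.1.trans hCC', hC'sub, hC'bi⟩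
    have hle : C.ncard ≤ C'.ncard := Set.ncard_le_ncard hCC' C'.toFinite
    have heq := hCmax hC'F hle
    exact (Set.eq_of_subset_of_ncard_le hCC' heq C'.toFinite).symm
  have hcard := hblock C hblk
  have h1 : d + 1 ≤ (insert v (T i)).ncard := by
    rw [Set.ncard_insert_of_notMem (hTv i)]
    have := hTcard i
    omega
  have h2 : (insert v (T i)).ncard ≤ C.ncard := Set.ncard_le_ncard hCF.1 C.toFinite
  omega
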